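/- arXiv:2509.20332 — 4 statements merged into one kernel-verified Lean document; each statement's English description precedes it below -/
import Mathlib

section
/- Let X, Y be disjoint sets of distinct reals, N = |X| + |Y|, x ∈ X, X' = X \ {x}, and x* a real distinct from all values in X' ∪ Y, X* = {x*} ∪ X'. Suppose (rank(x, X∪Y) - (N+1)/2)(rank(x*, X*∪Y) - (N+1)/2) ≥ 0 and |rank(x, X∪Y) - (N+1)/2| = |rank(x*, X*∪Y) - (N+1)/2| + 1. Then the Ansari-Bradley statistic satisfies T(X,Y) ≥ T(X*,Y). -/
open Finset

/-- rank of `x` in `Z`: number of elements of `Z` less than or equal to `x`. -/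
noncomputable def rk (x : ℝ) (Z : Finset ℝ) : ℕ := (Z.filter (fun z => z ≤ x)).card

/-- Ansari-Bradley test statistic. -/
noncomputable def ABT (A B : Finset ℝ) : ℝ :=
  ∑ a ∈ A, |(rk a (A ∪ B) : ℝ) - (((A ∪ B).card : ℝ) + 1) / 2|

lemma rk_insert (a t : ℝ) (S : Finset ℝ) (ht : t ∉ S) :
    rk a (insert t S) = rk a S + (if t ≤ a then 1 else 0) := by
  unfold rk
  rw [Finset.filter_insert]
  split
  · rw [Finset.card_insert_of_notMem (fun h => ht (Finset.mem_filter.mp h).1)]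
  · simp

lemma abs_sub_same_sign (u v : ℝ) (h : 0 ≤ u * v) : |u - v| = abs (|u| - |v|) := by
  rcases mul_nonneg_iff.mp h with ⟨hu, hv⟩ | ⟨hu, hv⟩
  · rw [abs_of_nonneg hu, abs_of_nonneg hv]
  · rw [abs_of_nonpos hu, abs_of_nonpos hv, show u - v = -(-u - -v) by ring, abs_neg]

theorem stmt3 (X Y : Finset ℝ) (x xs : ℝ) (hd : Disjoint X Y) (hx : x ∈ X)
    (X' Xs : Finset ℝ) (hX' : X' = X.erase x) (hxs : xs ∉ X' ∪ Y)
    (hXs : Xs = insert xs X') (N : ℕ) (hN : N = X.card + Y.card)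
    (hsign : ((rk x (X ∪ Y) : ℝ) - ((N : ℝ) + 1) / 2)
        * ((rk xs (Xs ∪ Y) : ℝ) - ((N : ℝ) + 1) / 2) ≥ 0)
    (habs : |(rk x (X ∪ Y) : ℝ) - ((N : ℝ) + 1) / 2|
        = |(rk xs (Xs ∪ Y) : ℝ) - ((N : ℝ) + 1) / 2| + 1) :
    ABT X Y ≥ ABT Xs Y := by
  set S := X' ∪ Y with hS
  have hxX' : x ∉ X' := by simp [hX']
  have hxY : x ∉ Y := fun h => (Finset.disjoint_left.mp hd hx) h
  have hxS : x ∉ S := by simp [hS, hxX', hxY]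
  have hxsS : xs ∉ S := hxs
  have hxsX' : xs ∉ X' := fun h => hxsS (mem_union_left _ h)
  have hXeq : X = insert x X' := by rw [hX', Finset.insert_erase hx]
  have hXU : X ∪ Y = insert x S := by rw [hXeq, hS, Finset.insert_union]
  have hXsU : Xs ∪ Y = insert xs S := by rw [hXs, hS, Finset.insert_union]
  have hX'S : X' ⊆ S := Finset.subset_union_left
  have hcard1 : (X ∪ Y).card = N := by
    rw [Finset.card_union_of_disjoint hd, hN]
  have hScard : S.card + 1 = N := by
    rw [hXU, Finset.card_insert_of_notMem hxS] at hcard1; omega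
  rw [hXU, hXsU] at hsign habs
  -- rank at the special points
  have hrx : (rk x (insert x S) : ℝ) = (rk x S : ℝ) + 1 := by
    rw [rk_insert x x S hxS, if_pos le_rfl]; push_cast; ring
  have hrxs : (rk xs (insert xs S) : ℝ) = (rk xs S : ℝ) + 1 := by
    rw [rk_insert xs xs S hxsS, if_pos le_rfl]; push_cast; ring
  -- |rk x S - rk xs S| = 1
  have hdiff : |(rk x S : ℝ) - (rk xs S : ℝ)| = 1 := by
    have h1 := abs_sub_same_sign _ _ hsign
    rw [habs] at h1
    have h2 : ((rk x (insert x S) : ℝ) - ((N : ℝ) + 1) / 2)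
        - ((rk xs (insert xs S) : ℝ) - ((N : ℝ) + 1) / 2)
        = (rk x S : ℝ) - (rk xs S : ℝ) := by rw [hrx, hrxs]; ring
    rw [h2] at h1
    rw [h1]; simp
  -- key bound on the sum of rank changes over X'
  have hbound : ∑ a ∈ X', |(rk a (insert xs S) : ℝ) - (rk a (insert x S) : ℝ)| ≤ 1 := by
    have hpt : ∀ a ∈ X', |(rk a (insert xs S) : ℝ) - (rk a (insert x S) : ℝ)|
        = |(if xs ≤ a then (1:ℝ) else 0) - (if x ≤ a then (1:ℝ) else 0)| := by
      intro a _
      rw [rk_insert a xs S hxsS, rk_insert a x S hxS]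
      push_cast
      congr 1
      split <;> split <;> ring
    rw [Finset.sum_congr rfl hpt]
    have hstep : ∑ a ∈ X', |(if xs ≤ a then (1:ℝ) else 0) - (if x ≤ a then (1:ℝ) else 0)|
        ≤ ∑ a ∈ S, |(if xs ≤ a then (1:ℝ) else 0) - (if x ≤ a then (1:ℝ) else 0)| :=
      Finset.sum_le_sum_of_subset_of_nonneg hX'S (fun _ _ _ => abs_nonneg _)
    have hflip : ∀ a ∈ S, |(if xs ≤ a then (1:ℝ) else 0) - (if x ≤ a then (1:ℝ) else 0)|
        = |(if a ≤ xs then (1:ℝ) else 0) - (if a ≤ x then (1:ℝ) else 0)| := by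
      intro a ha
      have hax : a ≠ x := fun h => hxS (h ▸ ha)
      have haxs : a ≠ xs := fun h => hxsS (h ▸ ha)
      have e1 : (if x ≤ a then (1:ℝ) else 0) = if a ≤ x then 0 else 1 := by
        by_cases h : a ≤ x
        · rw [if_pos h, if_neg (fun h' => hax (le_antisymm h h'))]
        · rw [if_neg h, if_pos (le_of_not_ge h)]
      have e2 : (if xs ≤ a then (1:ℝ) else 0) = if a ≤ xs then 0 else 1 := by
        by_cases h : a ≤ xs
        · rw [if_pos h, if_neg (fun h' => haxs (le_antisymm h h'))]
        · rw [if_neg h, if_pos (le_of_not_ge h)]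
      rw [e1, e2]
      by_cases h1 : a ≤ x <;> by_cases h2 : a ≤ xs <;> simp [h1, h2]
    rw [Finset.sum_congr rfl hflip] at hstep
    refine hstep.trans ?_
    have hrS : ∀ t : ℝ, ((rk t S : ℝ)) = ∑ a ∈ S, (if a ≤ t then (1:ℝ) else 0) := by
      intro t
      unfold rk
      rw [Finset.sum_boole]
    rcases le_total x xs with hle | hle
    · have : ∀ a ∈ S, |(if a ≤ xs then (1:ℝ) else 0) - (if a ≤ x then (1:ℝ) else 0)|
          = (if a ≤ xs then (1:ℝ) else 0) - (if a ≤ x then (1:ℝ) else 0) := by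
        intro a _
        apply abs_of_nonneg
        by_cases h1 : a ≤ x
        · rw [if_pos h1, if_pos (h1.trans hle)]; norm_num
        · rw [if_neg h1]; split <;> norm_num
      rw [Finset.sum_congr rfl this, Finset.sum_sub_distrib, ← hrS, ← hrS]
      have := neg_abs_le ((rk x S : ℝ) - (rk xs S : ℝ))
      rw [hdiff] at this
      linarith
    · have : ∀ a ∈ S, |(if a ≤ xs then (1:ℝ) else 0) - (if a ≤ x then (1:ℝ) else 0)|
          = (if a ≤ x then (1:ℝ) else 0) - (if a ≤ xs then (1:ℝ) else 0) := by
        intro a _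
        rw [abs_sub_comm]
        apply abs_of_nonneg
        by_cases h1 : a ≤ xs
        · rw [if_pos h1, if_pos (h1.trans hle)]; norm_num
        · rw [if_neg h1]; split <;> norm_num
      rw [Finset.sum_congr rfl this, Finset.sum_sub_distrib, ← hrS, ← hrS]
      have := le_abs_self ((rk x S : ℝ) - (rk xs S : ℝ))
      rw [hdiff] at this
      linarith
  -- assemble
  unfold ABT
  rw [hXU, hXsU, hXeq, hXs,
    Finset.card_insert_of_notMem hxS, Finset.card_insert_of_notMem hxsS, hScard,
    Finset.sum_insert hxX', Finset.sum_insert hxsX']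
  have hterm : ∀ a ∈ X',
      |(rk a (insert xs S) : ℝ) - ((N : ℝ) + 1) / 2|
        - |(rk a (insert x S) : ℝ) - ((N : ℝ) + 1) / 2|
      ≤ |(rk a (insert xs S) : ℝ) - (rk a (insert x S) : ℝ)| := by
    intro a _
    have := abs_sub_abs_le_abs_sub ((rk a (insert xs S) : ℝ) - ((N : ℝ) + 1) / 2)
      ((rk a (insert x S) : ℝ) - ((N : ℝ) + 1) / 2)
    calc |(rk a (insert xs S) : ℝ) - ((N : ℝ) + 1) / 2|
        - |(rk a (insert x S) : ℝ) - ((N : ℝ) + 1) / 2|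
        ≤ |((rk a (insert xs S) : ℝ) - ((N : ℝ) + 1) / 2)
          - ((rk a (insert x S) : ℝ) - ((N : ℝ) + 1) / 2)| := this
      _ = |(rk a (insert xs S) : ℝ) - (rk a (insert x S) : ℝ)| := by ring_nf
  have hsum := Finset.sum_le_sum hterm
  rw [Finset.sum_sub_distrib] at hsum
  have := hsum.trans hbound
  linarith [habs]
end

section
/- Let X, Y be disjoint finite sets of distinct reals, X' ⊂ X with |X'| = n' < n = |X|, and X̂ = {x̂₁,…,x̂_{n-n'}} a set of reals with X* = X̂ ∪ X', all values in X* ∪ Y distinct. Suppose the set of ranks {rank(x̂₁, X*∪Y),…,rank(x̂_{n-n'}, X*∪Y)} consists of consecutive integers. Then for any x ∈ X': rank(x, X' ∪ Y) ≥ min_i rank(x̂ᵢ, X* ∪ Y) if and only if rank(x, X* ∪ Y) = rank(x, X' ∪ Y) + (n - n'). -/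
open Finset

lemma rk_mono {x y : ℝ} (Z : Finset ℝ) (h : x ≤ y) : rk x Z ≤ rk y Z := by
  apply card_le_card
  intro z hz
  simp only [mem_filter] at *
  exact ⟨hz.1, hz.2.trans h⟩

lemma rk_strict {x z : ℝ} {Z : Finset ℝ} (hz : z ∈ Z) (h : x < z) : rk x Z < rk z Z := by
  apply card_lt_card
  constructor
  · intro w hw; simp only [mem_filter] at *; exact ⟨hw.1, hw.2.trans h.le⟩
  · intro hsubset
    have hmem : z ∈ Z.filter (fun w => w ≤ x) := hsubset (by simp [hz])
    simp only [mem_filter] at hmem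
    exact absurd hmem.2 (not_le.mpr h)

theorem stmt12 (X Y Xp Xh Xs : Finset ℝ) (n n' : ℕ) (hd : Disjoint X Y)
    (hsub : Xp ⊆ X) (hn : X.card = n) (hn' : Xp.card = n') (hlt : n' < n)
    (hXh : Xh.card = n - n') (hXs : Xs = Xh ∪ Xp)
    (hdisj : Disjoint Xh (Xp ∪ Y))
    (hconsec : ∃ a : ℕ, Xh.image (fun z => rk z (Xs ∪ Y))
        = Finset.Icc a (a + (n - n') - 1))
    (x : ℝ) (hx : x ∈ Xp) :
    (∃ z ∈ Xh, rk z (Xs ∪ Y) ≤ rk x (Xp ∪ Y))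
      ↔ rk x (Xs ∪ Y) = rk x (Xp ∪ Y) + (n - n') := by
  obtain ⟨a, hcons⟩ := hconsec
  set m := n - n' with hm_def
  have hm : 1 ≤ m := by omega
  have hXhS : Xh ⊆ Xs ∪ Y := by
    intro z hz; subst hXs; simp [mem_union, hz]
  have hxS : x ∈ Xs ∪ Y := by
    subst hXs; simp [mem_union, hx]
  -- rank equivalence for elements of Xh
  have key : ∀ z ∈ Xh, (z ≤ x ↔ rk z (Xs ∪ Y) ≤ rk x (Xs ∪ Y)) := by
    intro z hz
    constructor
    · exact fun h => rk_mono _ h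
    · intro h
      by_contra hc
      exact absurd (rk_strict (hXhS hz) (not_le.mp hc)) (not_lt.mpr h)
  -- splitting of rank
  set R := rk x (Xp ∪ Y) with hR
  set k := (Xh.filter (fun z => z ≤ x)).card with hk
  have hsplit : rk x (Xs ∪ Y) = R + k := by
    have hU : Xs ∪ Y = (Xp ∪ Y) ∪ Xh := by
      rw [hXs]; ext w; simp [mem_union]; tauto
    rw [hR, rk, rk, hU, filter_union, card_union_of_disjoint]
    exact (hdisj.symm.mono (filter_subset _ _) (filter_subset _ _))
  have hk_le : k ≤ m := by
    rw [hk, ← hXh]; exact card_filter_le _ _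
  clear_value R k
  -- injectivity of rank on Xh
  have hinj : Set.InjOn (fun z => rk z (Xs ∪ Y)) Xh := by
    intro z1 h1 z2 h2 heq
    by_contra hne
    rcases lt_or_gt_of_ne hne with h | h
    · exact absurd heq (Nat.ne_of_lt (rk_strict (hXhS h2) h))
    · exact absurd heq.symm (Nat.ne_of_lt (rk_strict (hXhS h1) h))
  -- counting lemma
  have hcount : k = ((Finset.Icc a (a + m - 1)).filter (fun r => r ≤ R + k)).card := by
    have h1 : Xh.filter (fun z => z ≤ x)
        = Xh.filter (fun z => rk z (Xs ∪ Y) ≤ R + k) := by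
      apply filter_congr
      intro z hz
      rw [← hsplit]
      exact key z hz
    have h2 : ((Xh.filter (fun z => rk z (Xs ∪ Y) ≤ R + k)).image
          (fun z => rk z (Xs ∪ Y)))
        = (Xh.image (fun z => rk z (Xs ∪ Y))).filter (fun r => r ≤ R + k) := by
      ext r
      simp only [mem_filter, mem_image]
      constructor
      · rintro ⟨z, ⟨hz1, hz2⟩, rfl⟩; exact ⟨⟨z, hz1, rfl⟩, hz2⟩
      · rintro ⟨⟨z, hz1, rfl⟩, hle⟩; exact ⟨z, ⟨hz1, hle⟩, rfl⟩
    have h3 : (Xh.filter (fun z => z ≤ x)).card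
        = ((Finset.Icc a (a + m - 1)).filter (fun r => r ≤ R + k)).card := by
      rw [h1, ← card_image_of_injOn (hinj.mono (coe_subset.mpr (filter_subset _ _))),
        h2, hcons]
    exact hk.trans h3
  constructor
  · rintro ⟨z, hzXh, hzle⟩
    have hmem : rk z (Xs ∪ Y) ∈ Finset.Icc a (a + m - 1) := by
      rw [← hcons]; exact mem_image_of_mem _ hzXh
    have haR : a ≤ R := le_trans (mem_Icc.mp hmem).1 hzle
    have hkm : k = m := by
      by_contra hne
      have hklt : k < m := lt_of_le_of_ne hk_le hne
      have hsub2 : Finset.Icc a (a + k)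
          ⊆ (Finset.Icc a (a + m - 1)).filter (fun r => r ≤ R + k) := by
        intro r hr
        rw [mem_Icc] at hr
        rw [mem_filter, mem_Icc]
        exact ⟨⟨hr.1, by omega⟩, by omega⟩
      have := card_le_card hsub2
      rw [Nat.card_Icc] at this
      omega
    rw [hsplit, hkm]
  · intro h
    have hkm : k = m := by omega
    have hall : ∀ z ∈ Xh, z ≤ x := by
      have heq : Xh.filter (fun z => z ≤ x) = Xh :=
        eq_of_subset_of_card_le (filter_subset _ _) (by omega)
      intro z hz
      have hz' : z ∈ Xh.filter (fun w => w ≤ x) := by rw [heq]; exact hz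
      exact (mem_filter.mp hz').2
    have ha_mem : a ∈ Xh.image (fun z => rk z (Xs ∪ Y)) := by
      rw [hcons, mem_Icc]; omega
    have hb_mem : a + m - 1 ∈ Xh.image (fun z => rk z (Xs ∪ Y)) := by
      rw [hcons, mem_Icc]; omega
    obtain ⟨z₀, hz₀, hz₀rk⟩ := mem_image.mp ha_mem
    obtain ⟨w, hw, hwrk⟩ := mem_image.mp hb_mem
    have hwx : w < x := by
      have hne : w ≠ x := by
        intro hwe
        exact (disjoint_left.mp hdisj) hw (by simp [hwe, hx])
      exact lt_of_le_of_ne (hall w hw) hne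
    have hlt2 : a + m - 1 < R + m := by
      rw [← hwrk, ← h] at *
      exact rk_strict hxS hwx
    exact ⟨z₀, hz₀, by rw [hz₀rk]; omega⟩
end

section
/- Let X, Y be disjoint sets of distinct reals with |X| = n, |Y| = m, and Y' ⊆ Y a nonempty observed subset with |Y'| = m'. Then there exists a set Ŷ of m - m' distinct reals, each either smaller than min(X ∪ Y') or larger than max(X ∪ Y'), such that T(Ŷ ∪ Y', X) ≥ T(Y, X), where T is the Ansari-Bradley statistic. -/
open Finset

lemma one_le_rk {b : ℝ} {S : Finset ℝ} (hb : b ∈ S) : 1 ≤ rk b S :=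
  card_pos.mpr ⟨b, mem_filter.mpr ⟨hb, le_refl b⟩⟩

lemma rk_le_card {b : ℝ} {S : Finset ℝ} : rk b S ≤ S.card := card_filter_le _ _

lemma lt_filter_card {b : ℝ} {S : Finset ℝ} (hb : b ∈ S) :
    (S.filter (fun z => z < b)).card + 1 = rk b S := by
  have h : S.filter (fun z => z ≤ b) = insert b (S.filter (fun z => z < b)) := by
    ext z
    simp only [mem_filter, mem_insert]
    constructor
    · rintro ⟨hz, hzb⟩
      rcases eq_or_lt_of_le hzb with h | h
      · exact Or.inl h
      · exact Or.inr ⟨hz, h⟩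
    · rintro (rfl | ⟨hz, hzb⟩)
      · exact ⟨hb, le_refl _⟩
      · exact ⟨hz, hzb.le⟩
  rw [rk, h, card_insert_of_notMem (by simp)]

lemma gt_filter_card {b : ℝ} {S : Finset ℝ} :
    rk b S + (S.filter (fun z => b < z)).card = S.card := by
  have h := card_filter_add_card_filter_not (s := S) (p := fun z => z ≤ b)
  have h2 : S.filter (fun a => ¬ a ≤ b) = S.filter (fun z => b < z) := by
    apply filter_congr; intros; simp [not_le]
  rw [h2] at h
  rw [rk, h]

lemma abs_le_abs_add_one (x c : ℝ) : |x - c| ≤ |x + 1 - c| + 1 := by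
  have h := abs_sub_abs_le_abs_sub (x - c) (x + 1 - c)
  have h2 : (x - c) - (x + 1 - c) = -1 := by ring
  rw [h2, abs_neg, abs_one] at h
  linarith

lemma abs_add_one_le (x c : ℝ) : |x + 1 - c| ≤ |x - c| + 1 := by
  have h := abs_sub_abs_le_abs_sub (x + 1 - c) (x - c)
  have h2 : (x + 1 - c) - (x - c) = 1 := by ring
  rw [h2, abs_one] at h
  linarith

lemma step (X A : Finset ℝ) (hd : Disjoint X A) (b : ℝ) (hb : b ∈ A) :
    ∃ t, ((∀ w ∈ A ∪ X, t < w) ∨ (∀ w ∈ A ∪ X, w < t)) ∧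
      ABT (insert t (A.erase b)) X ≥ ABT A X := by
  classical
  set S := A ∪ X with hSdef
  have hbS : b ∈ S := mem_union_left _ hb
  have hSne : S.Nonempty := ⟨b, hbS⟩
  have hbX : b ∉ X := fun h => disjoint_left.mp hd h hb
  have hAe : A.erase b ∪ X = S.erase b := by
    rw [hSdef, erase_union_distrib, erase_eq_of_notMem hbX]
  have hNpos : 1 ≤ S.card := card_pos.mpr hSne
  have hAsubS : A.erase b ⊆ S := (erase_subset _ _).trans subset_union_left
  have hrb1 : 1 ≤ rk b S := one_le_rk hbS
  have hrbN : rk b S ≤ S.card := rk_le_card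
  by_cases hside : 2 * rk b S ≤ S.card + 1
  · -- place new point below everything
    set t := S.min' hSne - 1 with htd
    have ht : ∀ w ∈ S, t < w := fun w hw => by
      have := S.min'_le w hw; simp only [htd]; linarith
    have htS : t ∉ S := fun h => lt_irrefl t (ht t h)
    refine ⟨t, Or.inl (fun w hw => ht w hw), ?_⟩
    have htA : t ∉ A.erase b := fun h => htS (hAsubS h)
    have hU : insert t (A.erase b) ∪ X = insert t (S.erase b) := by
      rw [insert_union, hAe]
    set S' := insert t (S.erase b) with hS'def
    have htS' : t ∉ S.erase b := fun h => htS (mem_of_mem_erase h)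
    have hcard : S'.card = S.card := by
      rw [hS'def, card_insert_of_notMem htS', card_erase_of_mem hbS]
      omega
    set c : ℝ := ((S.card : ℝ) + 1) / 2 with hcd
    have hrkt : rk t S' = 1 := by
      rw [rk]
      have h1 : S'.filter (fun z => z ≤ t) = {t} := by
        ext z
        simp only [hS'def, mem_filter, mem_insert, mem_singleton]
        constructor
        · rintro ⟨hz | hz, hzt⟩
          · exact hz
          · exact absurd hzt (not_le.mpr (ht z (mem_of_mem_erase hz)))
        · rintro rfl; exact ⟨Or.inl rfl, le_refl _⟩
      rw [h1, card_singleton]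
    have hrka : ∀ a ∈ S.erase b, rk a S' = if a < b then rk a S + 1 else rk a S := by
      intro a ha
      have haS := mem_of_mem_erase ha
      have hab : a ≠ b := ne_of_mem_erase ha
      rw [rk, hS'def, filter_insert, if_pos (le_of_lt (ht a haS)), filter_erase,
        card_insert_of_notMem (fun h => htS (mem_filter.mp (mem_of_mem_erase h)).1)]
      by_cases hab2 : a < b
      · rw [if_pos hab2, erase_eq_of_notMem (by simp [not_le.mpr hab2]), rk]
      · rw [if_neg hab2]
        have hbf : b ∈ S.filter (fun z => z ≤ a) := mem_filter.mpr ⟨hbS, not_lt.mp hab2⟩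
        have h1 : 1 ≤ (S.filter (fun z => z ≤ a)).card := card_pos.mpr ⟨b, hbf⟩
        rw [card_erase_of_mem hbf, rk]
        omega
    -- now the sum manipulation
    unfold ABT
    rw [hU, hcard, sum_insert htA, ← add_sum_erase A _ hb]
    have hsum : ∑ a ∈ A.erase b, |(rk a S : ℝ) - c| ≤
        ∑ a ∈ A.erase b, (|(rk a S' : ℝ) - c| + if a < b then (1:ℝ) else 0) := by
      apply sum_le_sum
      intro a ha
      have ha' : a ∈ S.erase b := by
        rw [← hAe]; exact mem_union_left _ ha
      have hr := hrka a ha'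
      by_cases hab2 : a < b
      · rw [if_pos hab2] at hr ⊢
        have : (rk a S' : ℝ) = (rk a S : ℝ) + 1 := by rw [hr]; push_cast; ring
        rw [this]
        exact abs_le_abs_add_one _ _
      · rw [if_neg hab2] at hr ⊢
        rw [hr]
        simp
    rw [sum_add_distrib] at hsum
    have hboole : ∑ a ∈ A.erase b, (if a < b then (1:ℝ) else 0) =
        (((A.erase b).filter (fun a => a < b)).card : ℝ) := by
      rw [sum_boole]
    have hle : ((A.erase b).filter (fun a => a < b)).card ≤ (S.filter (fun z => z < b)).card :=
      card_le_card (filter_subset_filter _ hAsubS)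
    have hfc := lt_filter_card hbS
    have hkey : |(1:ℝ) - c| = |(rk b S : ℝ) - c| + ((rk b S : ℝ) - 1) := by
      have hc1 : (1:ℝ) ≤ c := by
        rw [hcd]
        have : (1:ℝ) ≤ (S.card : ℝ) := by exact_mod_cast hNpos
        linarith
      have hrc : (rk b S : ℝ) ≤ c := by
        rw [hcd]
        have : (2 * rk b S : ℝ) ≤ (S.card : ℝ) + 1 := by exact_mod_cast hside
        linarith
      rw [abs_of_nonpos (by linarith), abs_of_nonpos (by linarith)]
      ring
    have hcast : (((A.erase b).filter (fun a => a < b)).card : ℝ) ≤ (rk b S : ℝ) - 1 := by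
      have h1 : (((A.erase b).filter (fun a => a < b)).card : ℝ) ≤
          ((S.filter (fun z => z < b)).card : ℝ) := by exact_mod_cast hle
      have h2 : ((S.filter (fun z => z < b)).card : ℝ) + 1 = (rk b S : ℝ) := by
        exact_mod_cast hfc
      linarith
    rw [hrkt]
    push_cast
    linarith
  · -- place new point above everything
    set t := S.max' hSne + 1 with htd
    have ht : ∀ w ∈ S, w < t := fun w hw => by
      have := S.le_max' w hw; simp only [htd]; linarith
    have htS : t ∉ S := fun h => lt_irrefl t (ht t h)
    refine ⟨t, Or.inr (fun w hw => ht w hw), ?_⟩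
    have htA : t ∉ A.erase b := fun h => htS (hAsubS h)
    have hU : insert t (A.erase b) ∪ X = insert t (S.erase b) := by
      rw [insert_union, hAe]
    set S' := insert t (S.erase b) with hS'def
    have htS' : t ∉ S.erase b := fun h => htS (mem_of_mem_erase h)
    have hcard : S'.card = S.card := by
      rw [hS'def, card_insert_of_notMem htS', card_erase_of_mem hbS]
      omega
    set c : ℝ := ((S.card : ℝ) + 1) / 2 with hcd
    have hrkt : rk t S' = S.card := by
      rw [rk]
      have h1 : S'.filter (fun z => z ≤ t) = S' := by
        apply filter_true_of_mem
        intro z hz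
        rcases mem_insert.mp hz with rfl | hz
        · exact le_refl _
        · exact (ht z (mem_of_mem_erase hz)).le
      rw [h1, hcard]
    have hrka : ∀ a ∈ S.erase b, rk a S = if b < a then rk a S' + 1 else rk a S' := by
      intro a ha
      have haS := mem_of_mem_erase ha
      have hab : a ≠ b := ne_of_mem_erase ha
      have hS'f : rk a S' = ((S.filter (fun z => z ≤ a)).erase b).card := by
        rw [rk, hS'def, filter_insert, if_neg (not_le.mpr (ht a haS)), filter_erase]
      by_cases hab2 : b < a
      · rw [if_pos hab2, hS'f]
        have hbf : b ∈ S.filter (fun z => z ≤ a) := mem_filter.mpr ⟨hbS, hab2.le⟩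
        have h1 : 1 ≤ (S.filter (fun z => z ≤ a)).card := card_pos.mpr ⟨b, hbf⟩
        rw [card_erase_of_mem hbf, rk]
        omega
      · rw [if_neg hab2, hS'f, erase_eq_of_notMem (by
          simp only [mem_filter, not_and]
          intro _
          have : a < b := lt_of_le_of_ne (not_lt.mp hab2) hab
          exact not_le.mpr this), rk]
    unfold ABT
    rw [hU, hcard, sum_insert htA, ← add_sum_erase A _ hb]
    have hsum : ∑ a ∈ A.erase b, |(rk a S : ℝ) - c| ≤
        ∑ a ∈ A.erase b, (|(rk a S' : ℝ) - c| + if b < a then (1:ℝ) else 0) := by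
      apply sum_le_sum
      intro a ha
      have ha' : a ∈ S.erase b := by
        rw [← hAe]; exact mem_union_left _ ha
      have hr := hrka a ha'
      by_cases hab2 : b < a
      · rw [if_pos hab2] at hr ⊢
        have : (rk a S : ℝ) = (rk a S' : ℝ) + 1 := by rw [hr]; push_cast; ring
        rw [this]
        exact abs_add_one_le _ _
      · rw [if_neg hab2] at hr ⊢
        rw [hr]
        simp
    rw [sum_add_distrib] at hsum
    have hboole : ∑ a ∈ A.erase b, (if b < a then (1:ℝ) else 0) =
        (((A.erase b).filter (fun a => b < a)).card : ℝ) := by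
      rw [sum_boole]
    have hle : ((A.erase b).filter (fun a => b < a)).card ≤ (S.filter (fun z => b < z)).card :=
      card_le_card (filter_subset_filter _ hAsubS)
    have hfc := gt_filter_card (b := b) (S := S)
    have hkey : |((S.card : ℝ)) - c| = |(rk b S : ℝ) - c| + ((S.card : ℝ) - (rk b S : ℝ)) := by
      have hc1 : c ≤ (S.card : ℝ) := by
        rw [hcd]
        have : (1:ℝ) ≤ (S.card : ℝ) := by exact_mod_cast hNpos
        linarith
      have hrc : c ≤ (rk b S : ℝ) := by
        rw [hcd]
        have : (S.card : ℝ) + 1 ≤ (2 * rk b S : ℝ) := by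
          exact_mod_cast Nat.le_of_not_lt (fun h => hside (by omega))
        push_cast at this
        linarith
      rw [abs_of_nonneg (by linarith), abs_of_nonneg (by linarith)]
      ring
    have hcast : (((A.erase b).filter (fun a => b < a)).card : ℝ) ≤
        (S.card : ℝ) - (rk b S : ℝ) := by
      have h1 : (((A.erase b).filter (fun a => b < a)).card : ℝ) ≤
          ((S.filter (fun z => b < z)).card : ℝ) := by exact_mod_cast hle
      have h2 : (rk b S : ℝ) + ((S.filter (fun z => b < z)).card : ℝ) = (S.card : ℝ) := by
        exact_mod_cast hfc
      linarith
    rw [hrkt]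
    linarith

lemma main (X Y' : Finset ℝ) : ∀ (k : ℕ) (A : Finset ℝ), Disjoint X A → Y' ⊆ A →
    ((A \ Y').filter (fun z =>
      ¬((∀ w ∈ X ∪ Y', z < w) ∨ (∀ w ∈ X ∪ Y', w < z)))).card = k →
    ∃ Yh : Finset ℝ, Yh.card = A.card - Y'.card ∧ Disjoint Yh (X ∪ Y') ∧
      (∀ z ∈ Yh, (∀ w ∈ X ∪ Y', z < w) ∨ (∀ w ∈ X ∪ Y', w < z)) ∧
      ABT (Yh ∪ Y') X ≥ ABT A X := by
  classical
  intro k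
  induction k with
  | zero =>
    intro A hd hsub hcard
    refine ⟨A \ Y', card_sdiff_of_subset hsub, ?_, ?_, ?_⟩
    · rw [disjoint_union_right]
      exact ⟨disjoint_of_subset_left sdiff_subset hd.symm, sdiff_disjoint⟩
    · intro z hz
      by_contra hc
      have : z ∈ (A \ Y').filter (fun z =>
          ¬((∀ w ∈ X ∪ Y', z < w) ∨ (∀ w ∈ X ∪ Y', w < z))) := mem_filter.mpr ⟨hz, hc⟩
      rw [card_eq_zero.mp hcard] at this
      exact notMem_empty z this
    · rw [sdiff_union_self_eq_union, union_eq_left.mpr hsub]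
  | succ k ih =>
    intro A hd hsub hcard
    obtain ⟨b, hbmem⟩ : ((A \ Y').filter (fun z =>
        ¬((∀ w ∈ X ∪ Y', z < w) ∨ (∀ w ∈ X ∪ Y', w < z)))).Nonempty :=
      card_pos.mp (by omega)
    obtain ⟨hbAY, hbP⟩ := mem_filter.mp hbmem
    obtain ⟨hbA, hbY'⟩ := mem_sdiff.mp hbAY
    obtain ⟨t, htP, habt⟩ := step X A hd b hbA
    have htAX : t ∉ A ∪ X := by
      intro h
      rcases htP with h1 | h1
      · exact lt_irrefl t (h1 t h)
      · exact lt_irrefl t (h1 t h)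
    have htA : t ∉ A := fun h => htAX (mem_union_left _ h)
    have htX : t ∉ X := fun h => htAX (mem_union_right _ h)
    have htY' : t ∉ Y' := fun h => htA (hsub h)
    have htPXY : (∀ w ∈ X ∪ Y', t < w) ∨ (∀ w ∈ X ∪ Y', w < t) := by
      have hss : X ∪ Y' ⊆ A ∪ X := by
        apply union_subset (subset_union_right) (hsub.trans subset_union_left)
      rcases htP with h1 | h1
      · exact Or.inl (fun w hw => h1 w (hss hw))
      · exact Or.inr (fun w hw => h1 w (hss hw))
    set A' := insert t (A.erase b) with hA'def
    have htAe : t ∉ A.erase b := fun h => htA (mem_of_mem_erase h)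
    have hcardA' : A'.card = A.card := by
      rw [hA'def, card_insert_of_notMem htAe, card_erase_of_mem hbA]
      have : 1 ≤ A.card := card_pos.mpr ⟨b, hbA⟩
      omega
    have hd' : Disjoint X A' := by
      rw [hA'def, disjoint_insert_right]
      exact ⟨htX, disjoint_of_subset_right (erase_subset _ _) hd⟩
    have hsub' : Y' ⊆ A' := by
      intro y hy
      rw [hA'def, mem_insert]
      right
      exact mem_erase.mpr ⟨fun h => hbY' (h ▸ hy), hsub hy⟩
    have hmeas : (A' \ Y').filter (fun z =>
        ¬((∀ w ∈ X ∪ Y', z < w) ∨ (∀ w ∈ X ∪ Y', w < z))) =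
        ((A \ Y').filter (fun z =>
          ¬((∀ w ∈ X ∪ Y', z < w) ∨ (∀ w ∈ X ∪ Y', w < z)))).erase b := by
      ext z
      simp only [hA'def, mem_filter, mem_sdiff, mem_insert, mem_erase, mem_filter, mem_sdiff]
      constructor
      · rintro ⟨⟨rfl | hz, hzY'⟩, hzP⟩
        · exact absurd htPXY hzP
        · exact ⟨hz.1, ⟨hz.2, hzY'⟩, hzP⟩
      · rintro ⟨hzb, ⟨hzA, hzY'⟩, hzP⟩
        exact ⟨⟨Or.inr ⟨hzb, hzA⟩, hzY'⟩, hzP⟩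
    have hcard' : ((A' \ Y').filter (fun z =>
        ¬((∀ w ∈ X ∪ Y', z < w) ∨ (∀ w ∈ X ∪ Y', w < z)))).card = k := by
      rw [hmeas, card_erase_of_mem hbmem, hcard]
      omega
    obtain ⟨Yh, h1, h2, h3, h4⟩ := ih A' hd' hsub' hcard'
    exact ⟨Yh, by rw [h1, hcardA'], h2, h3, ge_trans h4 habt⟩

theorem stmt16 (X Y Y' : Finset ℝ) (n m m' : ℕ) (hd : Disjoint X Y)
    (hn : X.card = n) (hm : Y.card = m) (hsub : Y' ⊆ Y) (hne : Y'.Nonempty)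
    (hm' : Y'.card = m') :
    ∃ Yh : Finset ℝ, Yh.card = m - m' ∧ Disjoint Yh (X ∪ Y') ∧
      (∀ z ∈ Yh, (∀ w ∈ X ∪ Y', z < w) ∨ (∀ w ∈ X ∪ Y', w < z)) ∧
      ABT (Yh ∪ Y') X ≥ ABT Y X := by
  classical
  obtain ⟨Yh, h1, h2, h3, h4⟩ := main X Y' _ Y hd hsub rfl
  exact ⟨Yh, by rw [h1, hm, hm'], h2, h3, h4⟩
end

section
/- Let X = {x₁,…,xₙ} and Y' = {y₁,…,y_{m'}} be disjoint sets of distinct reals, and let Ŷ be a set of m - m' distinct reals with exactly k of them strictly greater than max(X ∪ Y') and the remaining m - m' - k strictly less than min(X ∪ Y'). Set Y* = Ŷ ∪ Y', N' = (n + m' + 1)/2, M' = (m - m')/2. Then T(X, Y*) = T(X, Y') + f(k), where f(k) = (k - M')·∑ᵢ(Aᵢ - Cᵢ) + sgn(k - M')·∑ᵢ Bᵢ·(2N' + k - M' - 2·rank(xᵢ, X ∪ Y')), with Aᵢ = 1[rank(xᵢ, X∪Y') < N' + min(0, k-M')], Bᵢ = 1[N' + min(0,k-M') ≤ rank(xᵢ,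 X∪Y') ≤ N' + max(0,k-M')], Cᵢ = 1[rank(xᵢ, X∪Y') > N' + max(0,k-M')], and sgn(t) = 1 if t ≥ 0, -1 otherwise. -/
open Finset

/-- The function from Definition of func in the paper. -/
noncomputable def ABfunc (X Y' : Finset ℝ) (m k : ℕ) : ℝ :=
  let n : ℕ := X.card
  let m' : ℕ := Y'.card
  let N' : ℝ := ((n : ℝ) + (m' : ℝ) + 1) / 2
  let M' : ℝ := ((m : ℝ) - (m' : ℝ)) / 2
  let a : ℝ := min 0 ((k : ℝ) - M')
  let b : ℝ := max 0 ((k : ℝ) - M')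
  ((k : ℝ) - M') *
      ∑ x ∈ X, ((if (rk x (X ∪ Y') : ℝ) < N' + a then (1 : ℝ) else 0) -
        (if N' + b < (rk x (X ∪ Y') : ℝ) then (1 : ℝ) else 0)) +
    (if (0 : ℝ) ≤ (k : ℝ) - M' then (1 : ℝ) else -1) *
      ∑ x ∈ X, (if N' + a ≤ (rk x (X ∪ Y') : ℝ) ∧ (rk x (X ∪ Y') : ℝ) ≤ N' + b then
        2 * N' + (k : ℝ) - M' - 2 * (rk x (X ∪ Y') : ℝ) else 0)

set_option maxHeartbeats 1000000 in
lemma abs_shift_identity (r N' d : ℝ) :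
    |r - N' - d| = |r - N'| +
      (d * ((if r < N' + min 0 d then (1 : ℝ) else 0) -
        (if N' + max 0 d < r then (1 : ℝ) else 0)) +
      (if (0 : ℝ) ≤ d then (1 : ℝ) else -1) *
        (if N' + min 0 d ≤ r ∧ r ≤ N' + max 0 d then 2 * N' + d - 2 * r else 0)) := by
  have hc : (if N' + min 0 d ≤ r ∧ r ≤ N' + max 0 d then 2 * N' + d - 2 * r else 0)
      = (if N' + min 0 d ≤ r then (1 : ℝ) else 0) *
        (if r ≤ N' + max 0 d then 2 * N' + d - 2 * r else 0) := by
    split_ifs <;> first | ring1 | (exfalso; tauto)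
  rw [hc]
  rcases le_or_gt 0 d with hpos | hneg
  · rw [min_eq_left hpos, max_eq_right hpos]
    split_ifs <;>
      rcases abs_cases (r - N' - d) with ⟨e1, _⟩ | ⟨e1, _⟩ <;>
      rcases abs_cases (r - N') with ⟨e2, _⟩ | ⟨e2, _⟩ <;>
      rw [e1, e2] <;> (try push_neg at *) <;> ring_nf <;> linarith
  · rw [min_eq_right hneg.le, max_eq_left hneg.le]
    split_ifs <;>
      rcases abs_cases (r - N' - d) with ⟨e1, _⟩ | ⟨e1, _⟩ <;>
      rcases abs_cases (r - N') with ⟨e2, _⟩ | ⟨e2, _⟩ <;>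
      rw [e1, e2] <;> (try push_neg at *) <;> ring_nf <;> linarith

theorem stmt18 (X Y' Yh : Finset ℝ) (m m' k : ℕ)
    (hd : Disjoint X Y') (hm' : Y'.card = m') (hmm : m' ≤ m)
    (hYh : Yh.card = m - m') (hk : k ≤ m - m')
    (hsplit : ∀ z ∈ Yh, (∀ w ∈ X ∪ Y', z < w) ∨ (∀ w ∈ X ∪ Y', w < z))
    (hkcount : (Yh.filter (fun z => ∀ w ∈ X ∪ Y', w < z)).card = k) :
    ABT X (Yh ∪ Y') = ABT X Y' + ABfunc X Y' m k := by
  classical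
  set n := X.card with hn
  have hdisj : Disjoint Yh (X ∪ Y') := by
    rw [Finset.disjoint_left]
    intro z hz hz'
    rcases hsplit z hz with h | h
    · exact lt_irrefl z (h z hz')
    · exact lt_irrefl z (h z hz')
  have hYhX : Disjoint Yh X := (Finset.disjoint_union_right.mp hdisj).1
  have hYhY : Disjoint Yh Y' := (Finset.disjoint_union_right.mp hdisj).2
  have hcardN : (X ∪ (Yh ∪ Y')).card = n + (m - m') + m' := by
    rw [Finset.card_union_of_disjoint, Finset.card_union_of_disjoint hYhY, hYh, hm']
    · ring
    · exact Finset.disjoint_union_right.mpr ⟨hYhX.symm, hd⟩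
  have hcard : ((X ∪ (Yh ∪ Y')).card : ℝ) = (n : ℝ) + m := by
    rw [hcardN]
    push_cast [Nat.cast_sub hmm]
    ring
  have hcard' : ((X ∪ Y').card : ℝ) = (n : ℝ) + m' := by
    rw [Finset.card_union_of_disjoint hd, hm']; push_cast; ring
  have hrk : ∀ x ∈ X, (rk x (X ∪ (Yh ∪ Y')) : ℝ) =
      (rk x (X ∪ Y') : ℝ) + ((m : ℝ) - m' - k) := by
    intro x hx
    have hxu : x ∈ X ∪ Y' := Finset.mem_union_left _ hx
    have hset : X ∪ (Yh ∪ Y') = (X ∪ Y') ∪ Yh := by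
      ext z; simp [Finset.mem_union]; tauto
    have hfil : Yh.filter (fun z => z ≤ x)
        = Yh \ Yh.filter (fun z => ∀ w ∈ X ∪ Y', w < z) := by
      ext z
      simp only [Finset.mem_filter, Finset.mem_sdiff, not_and]
      constructor
      · rintro ⟨hz, hzx⟩
        exact ⟨hz, fun _ habove => absurd hzx (not_le.mpr (habove x hxu))⟩
      · rintro ⟨hz, hna⟩
        refine ⟨hz, ?_⟩
        rcases hsplit z hz with h | h
        · exact le_of_lt (h x hxu)
        · exact absurd h (hna hz)
    have hfc : (Yh.filter (fun z => z ≤ x)).card = (m - m') - k := by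
      rw [hfil, Finset.card_sdiff_of_subset (Finset.filter_subset _ _), hYh, hkcount]
    have hnat : rk x (X ∪ (Yh ∪ Y')) = rk x (X ∪ Y') + ((m - m') - k) := by
      unfold rk
      rw [hset, Finset.filter_union, Finset.card_union_of_disjoint, hfc]
      exact Finset.disjoint_filter_filter hdisj.symm
    rw [hnat]
    push_cast [Nat.cast_sub hk, Nat.cast_sub hmm]
    ring
  unfold ABT
  simp only [ABfunc]
  rw [hm']
  rw [Finset.mul_sum, Finset.mul_sum, ← Finset.sum_add_distrib, ← Finset.sum_add_distrib]
  apply Finset.sum_congr rfl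
  intro x hx
  rw [hrk x hx, hcard, hcard']
  set r : ℝ := (rk x (X ∪ Y') : ℝ) with hr
  set N' : ℝ := ((n : ℝ) + (m' : ℝ) + 1) / 2 with hN
  set d : ℝ := (k : ℝ) - ((m : ℝ) - (m' : ℝ)) / 2 with hdd
  have key : r + ((m : ℝ) - m' - k) - (((n : ℝ) + m) + 1) / 2 = r - N' - d := by
    rw [hN, hdd]; ring
  have hbody : 2 * N' + (k : ℝ) - ((m : ℝ) - (m' : ℝ)) / 2 - 2 * r
      = 2 * N' + d - 2 * r := by rw [hdd]; ring
  rw [key, hbody]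
  exact abs_shift_identity r N' d
end
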